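/- Let (𝔫, ⟨·,·⟩) be a 2-step nilpotent metric Lie algebra whose center z(𝔫) is 1-dimensional (equivalently, 𝔫 is isomorphic to the (2n+1)-dimensional Heisenberg Lie algebra, with an arbitrary inner product). Then every Killing-Yano tensor on (𝔫, ⟨·,·⟩) is zero. -/

import Mathlib

section Defs

variable {g : Type*} [LieRing g] [LieAlgebra ℝ g]

/-- `B` is a (positive definite) inner product on the real Lie algebra `g`,
given as a bilinear form. -/
structure IsInnerProduct (B : g →ₗ[ℝ] g →ₗ[ℝ] ℝ) : Prop where
  symm : ∀ x y : g, B x y = B y x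
  posdef : ∀ x : g, x ≠ 0 → 0 < B x x

/-- The Koszul formula characterizing the Levi-Civita connection of the metric Lie
algebra `(g, B)`: `2⟨∇ₓy, z⟩ = ⟨[x,y], z⟩ − ⟨[y,z], x⟩ + ⟨[z,x], y⟩`. -/
def IsLeviCivita (B : g →ₗ[ℝ] g →ₗ[ℝ] ℝ) (D : g → g → g) : Prop :=
  ∀ x y z : g, 2 * B (D x y) z = B ⁅x, y⁆ z - B ⁅y, z⁆ x + B ⁅z, x⁆ y

/-- A skew-symmetric endomorphism with respect to `B`. -/
def IsSkewSymmetric (B : g →ₗ[ℝ] g →ₗ[ℝ] ℝ) (T : g →ₗ[ℝ] g) : Prop :=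
  ∀ x y : g, B (T x) y = - B x (T y)

/-- The conformal Killing-Yano equation for an endomorphism `T` with associated 1-form `θ`:
`⟨(∇ₓT)y, z⟩ + ⟨(∇_yT)x, z⟩ = 2⟨x,y⟩θ(z) − ⟨y,z⟩θ(x) − ⟨x,z⟩θ(y)`,
where `(∇ₓT)y = ∇ₓ(Ty) − T(∇ₓy)`. -/
def IsCKYWith (B : g →ₗ[ℝ] g →ₗ[ℝ] ℝ) (D : g → g → g) (T : g →ₗ[ℝ] g)
    (θ : g →ₗ[ℝ] ℝ) : Prop :=
  ∀ x y z : g,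
    B (D x (T y) - T (D x y)) z + B (D y (T x) - T (D y x)) z =
      2 * B x y * θ z - B y z * θ x - B x z * θ y

/-- A Killing-Yano tensor is a CKY tensor with `θ = 0`. -/
def IsKY (B : g →ₗ[ℝ] g →ₗ[ℝ] ℝ) (D : g → g → g) (T : g →ₗ[ℝ] g) : Prop :=
  IsCKYWith B D T 0

/-- A parallel tensor: `(∇ₓT)y = 0` for all `x, y`. -/
def IsParallelT (D : g → g → g) (T : g →ₗ[ℝ] g) : Prop :=
  ∀ x y : g, D x (T y) - T (D x y) = 0

/-- The orthogonal complement of a submodule with respect to the bilinear form `B`. -/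
def orthComp (B : g →ₗ[ℝ] g →ₗ[ℝ] ℝ) (p : Submodule ℝ g) : Submodule ℝ g where
  carrier := {x : g | ∀ y ∈ p, B x y = 0}
  add_mem' := by
    intro a b ha hb y hy
    simp only [map_add, LinearMap.add_apply, ha y hy, hb y hy, add_zero]
  zero_mem' := by
    intro y hy
    simp
  smul_mem' := by
    intro c a ha y hy
    simp only [map_smul, LinearMap.smul_apply, ha y hy, smul_eq_mul, mul_zero]

end Defs

/-- On a 2-step nilpotent metric Lie algebra with 1-dimensional center (a
Heisenberg Lie algebra with arbitrary inner product), every Killing-Yano tensor is zero. -/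
theorem heisenberg_ky_trivial {n : Type*} [LieRing n] [LieAlgebra ℝ n]
    [FiniteDimensional ℝ n]
    (B : n →ₗ[ℝ] n →ₗ[ℝ] ℝ) (hB : IsInnerProduct B)
    (hnonab : ∃ x y : n, ⁅x, y⁆ ≠ 0)
    (h2step : ∀ x y z : n, ⁅x, ⁅y, z⁆⁆ = 0)
    (hcenter : Module.finrank ℝ (LieAlgebra.center ℝ n) = 1)
    (D : n → n → n) (hD : IsLeviCivita B D)
    (T : n →ₗ[ℝ] n) (hT : IsSkewSymmetric B T) (hKY : IsKY B D T) :
    T = 0 := by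
  classical
  -- work with the center as a plain submodule
  set p : Submodule ℝ n := (LieAlgebra.center ℝ n).toSubmodule with hp
  have hpfin : Module.finrank ℝ p = 1 := hcenter
  -- a nonzero central element
  have hpne : p ≠ ⊥ := by
    intro h
    rw [h] at hpfin
    simp at hpfin
  obtain ⟨ζ, hζp, hζne⟩ := Submodule.exists_mem_ne_zero_of_ne_bot hpne
  have hζc : ∀ u : n, ⁅u, ζ⁆ = 0 := by
    have := (LieModule.mem_maxTrivSubmodule ℝ n n ζ).mp hζp
    exact this
  -- normalize
  have hc : 0 < B ζ ζ := hB.posdef ζ hζne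
  set s : ℝ := (Real.sqrt (B ζ ζ))⁻¹ with hs
  set ξ : n := s • ζ with hξ
  have hsqrt : Real.sqrt (B ζ ζ) ≠ 0 := by positivity
  have hξξ : B ξ ξ = 1 := by
    rw [hξ]
    simp only [map_smul, LinearMap.smul_apply, smul_eq_mul, hs]
    rw [← Real.mul_self_sqrt hc.le]
    field_simp
    rw [Real.sqrt_sq (Real.sqrt_nonneg _)]
  have hξp : ξ ∈ p := p.smul_mem s hζp
  have hξne : ξ ≠ 0 := by
    intro h
    rw [h] at hξξ
    simp at hξξ
  -- ξ is central
  have hlie2 : ∀ u : n, ⁅u, ξ⁆ = 0 := by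
    intro u
    rw [hξ, lie_smul, hζc u, smul_zero]
  have hlie1 : ∀ u : n, ⁅ξ, u⁆ = 0 := by
    intro u
    rw [← lie_skew, hlie2 u, neg_zero]
  -- the center is spanned by ξ
  have hspan : Submodule.span ℝ {ξ} = p := by
    apply Submodule.eq_of_le_of_finrank_le
    · rw [Submodule.span_le, Set.singleton_subset_iff]; exact hξp
    · rw [hpfin, finrank_span_singleton hξne]
  -- any central element is a multiple of ξ
  have hcentral : ∀ w : n, (∀ u : n, ⁅u, w⁆ = 0) → w = B w ξ • ξ := by
    intro w hw
    have hwp : w ∈ p := (LieModule.mem_maxTrivSubmodule ℝ n n w).mpr hw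
    rw [← hspan] at hwp
    obtain ⟨a, ha⟩ := Submodule.mem_span_singleton.mp hwp
    have hBa : B w ξ = a := by
      rw [← ha]
      simp only [map_smul, LinearMap.smul_apply, smul_eq_mul, hξξ, mul_one]
    rw [hBa, ha]
  -- brackets are multiples of ξ
  have hbr : ∀ x y : n, ⁅x, y⁆ = B ⁅x, y⁆ ξ • ξ := by
    intro x y
    exact hcentral _ (fun u => h2step u x y)
  have hBB : ∀ u v w : n, B ⁅u, v⁆ w = B ⁅u, v⁆ ξ * B ξ w := by
    intro u v w
    conv_lhs => rw [hbr u v]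
    simp only [map_smul, LinearMap.smul_apply, smul_eq_mul, mul_assoc]
  -- Koszul formula in scalar form
  have hK : ∀ x y z : n, 2 * B (D x y) z =
      B ⁅x, y⁆ ξ * B ξ z - B ⁅y, z⁆ ξ * B ξ x + B ⁅z, x⁆ ξ * B ξ y := by
    intro x y z
    rw [hD x y z, hBB x y z, hBB y z x, hBB z x y]
  -- the KY equation with zero right-hand side
  have hKY' : ∀ x y z : n,
      B (D x (T y)) z - B (T (D x y)) z + (B (D y (T x)) z - B (T (D y x)) z) = 0 := by
    intro x y z
    have h := hKY x y z
    simpa only [map_sub, LinearMap.sub_apply, LinearMap.zero_apply, mul_zero,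
      zero_mul, sub_zero, zero_sub, neg_zero, add_zero] using h
  -- master scalar identity
  have key : ∀ x y z : n,
      (B ⁅x, T y⁆ ξ * B ξ z - B ⁅T y, z⁆ ξ * B ξ x + B ⁅z, x⁆ ξ * B ξ (T y))
      + (B ⁅x, y⁆ ξ * B ξ (T z) - B ⁅y, T z⁆ ξ * B ξ x + B ⁅T z, x⁆ ξ * B ξ y)
      + (B ⁅y, T x⁆ ξ * B ξ z - B ⁅T x, z⁆ ξ * B ξ y + B ⁅z, y⁆ ξ * B ξ (T x))
      + (B ⁅y, x⁆ ξ * B ξ (T z) - B ⁅x, T z⁆ ξ * B ξ y + B ⁅T z, y⁆ ξ * B ξ x) = 0 := by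
    intro x y z
    have h1 := hK x (T y) z
    have h2 := hK x y (T z)
    have h3 := hK y (T x) z
    have h4 := hK y x (T z)
    have h5 := hKY' x y z
    have t1 := hT (D x y) z
    have t2 := hT (D y x) z
    linear_combination 2*h5 - h1 + 2*t1 - h2 - h3 + 2*t2 - h4
  -- Step 1 : T ξ is central
  have k1 : ∀ z : n, B ⁅T ξ, z⁆ ξ = 0 := by
    intro z
    have h := key ξ ξ z
    simp only [hlie1, hlie2, map_zero, LinearMap.zero_apply, zero_mul, mul_zero,
      hξξ, mul_one, add_zero, zero_add, zero_sub, sub_zero] at h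
    linarith
  have hTξc : ∀ u : n, ⁅u, T ξ⁆ = 0 := by
    intro u
    have h : ⁅T ξ, u⁆ = 0 := by rw [hbr (T ξ) u, k1 u, zero_smul]
    rw [← lie_skew, h, neg_zero]
  -- Step 2 : T ξ = 0
  have hTξ : T ξ = 0 := by
    have h := hcentral (T ξ) hTξc
    have h2 : B (T ξ) ξ = 0 := by
      have := hT ξ ξ
      have hsym := hB.symm ξ (T ξ)
      linarith
    rw [h2, zero_smul] at h
    exact h
  have hBξT : ∀ u : n, B ξ (T u) = 0 := by
    intro u
    have h := hT ξ u
    rw [hTξ] at h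
    simp only [map_zero, LinearMap.zero_apply] at h
    linarith
  -- Step 3 : all values of T are central
  have step3 : ∀ x z : n,
      B ⁅T z, x⁆ ξ - B ⁅T x, z⁆ ξ - B ⁅x, T z⁆ ξ = 0 := by
    intro x z
    have h := key x ξ z
    simp only [hTξ, hlie1, hlie2, lie_zero, zero_lie, map_zero, LinearMap.zero_apply,
      zero_mul, mul_zero, hξξ, mul_one, hBξT, add_zero, zero_add, zero_sub,
      sub_zero, neg_zero] at h
    linarith
  have hskew : ∀ u v : n, B ⁅u, v⁆ ξ = - B ⁅v, u⁆ ξ := by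
    intro u v
    rw [← lie_skew v u, map_neg]
    simp
  have main : ∀ x z : n, B ⁅T x, z⁆ ξ = 0 := by
    intro x z
    have e1 := step3 x z
    have e2 := step3 z x
    have a1 := hskew x (T z)
    have a2 := hskew z (T x)
    linarith
  -- conclude
  ext x
  have hxc : ∀ u : n, ⁅u, T x⁆ = 0 := by
    intro u
    have h : ⁅T x, u⁆ = 0 := by rw [hbr (T x) u, main x u, zero_smul]
    rw [← lie_skew, h, neg_zero]
  have h := hcentral (T x) hxc
  have h2 : B (T x) ξ = 0 := by
    have := hT x ξ
    rw [hTξ] at this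
    simp only [map_zero] at this
    linarith
  rw [h2, zero_smul] at h
  simpa using h
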